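/- The closure in βℕ of the set of additive idempotent ultrafilters {u ∈ βℕ : u + u = u} is a left ideal of the multiplicative semigroup (βℕ, ·). -/
import Mathlib

/-- The ultrafilter extension of addition on `ℕ`. -/
def uadd (u v : Ultrafilter ℕ) : Ultrafilter ℕ :=
  u.bind fun x => v.map fun y => x + y

/-- The ultrafilter extension of multiplication on `ℕ`. -/
def umul (u v : Ultrafilter ℕ) : Ultrafilter ℕ :=
  u.bind fun x => v.map fun y => x * y

lemma mem_closure_ultra {S : Set (Ultrafilter ℕ)} {u : Ultrafilter ℕ} :
    u ∈ closure S ↔ ∀ s ∈ u, ∃ w ∈ S, s ∈ w := by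
  rw [ultrafilterBasis_is_basis.mem_closure_iff]
  constructor
  · intro h s hs
    obtain ⟨w, hw1, hw2⟩ := h {w | s ∈ w} ⟨s, rfl⟩ hs
    exact ⟨w, hw2, hw1⟩
  · rintro h o ⟨s, rfl⟩ hu
    obtain ⟨w, hw1, hw2⟩ := h s hu
    exact ⟨w, hw2, hw1⟩

lemma mem_ubind {u : Ultrafilter ℕ} {f : ℕ → Ultrafilter ℕ} {s : Set ℕ} :
    s ∈ u.bind f ↔ {x | s ∈ f x} ∈ u := by
  change s ∈ Filter.bind _ _ ↔ _
  rw [Filter.mem_bind']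
  rfl

lemma map_idem {n : ℕ} {w : Ultrafilter ℕ} (hw : uadd w w = w) :
    uadd (w.map (n * ·)) (w.map (n * ·)) = w.map (n * ·) := by
  conv_rhs => rw [← hw]
  ext s
  simp only [uadd, mem_ubind, Ultrafilter.mem_map, Set.preimage]
  constructor <;> intro h <;>
    · filter_upwards [h] with a ha
      filter_upwards [ha] with b hb
      simpa [Nat.mul_add] using hb

/-- The closure in `βℕ` of the set of additive idempotent ultrafilters is a
left ideal of the multiplicative semigroup `(βℕ, ·)`. -/
theorem stmt_12 :
    ∀ u ∈ closure {w : Ultrafilter ℕ | uadd w w = w}, ∀ v : Ultrafilter ℕ,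
      umul v u ∈ closure {w : Ultrafilter ℕ | uadd w w = w} := by
  intro u hu v
  rw [mem_closure_ultra]
  intro s hs
  rw [umul, mem_ubind] at hs
  obtain ⟨n, hn⟩ := Ultrafilter.nonempty_of_mem hs
  rw [Set.mem_setOf_eq, Ultrafilter.mem_map] at hn
  obtain ⟨w, hw, hsw⟩ := mem_closure_ultra.mp hu _ hn
  exact ⟨w.map (n * ·), map_idem hw, hsw⟩
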